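/- Let f : C → Set A be an atomized model, let d and e be terms over C, and let f' be the full crossing of d into e. Then for all terms a, b over C: f' satisfies a ≤ b if and only if either f satisfies a ≤ b, or f satisfies both a ∪ d ≤ b ∪ d and e ≤ b (where a ∪ d denotes the term formed by the union of the sets of constants a and d, whose atom set is the union of the atom sets of a and d). -/
import Mathlib


/-- The atom set of a term (set of constants) `t` under the atomized model `f`. -/
def atomSet {C A : Type*} (f : C → Set A) (t : Set C) : Set A := ⋃ c ∈ t, f c

/-- The atomized model `f` satisfies the positive relation `s ≤ t`. -/
def Sat {C A : Type*} (f : C → Set A) (s t : Set C) : Prop := atomSet f s ⊆ atomSet f t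

/-- The full crossing of the term `d` into the term `e` in the atomized model `f`. -/
def fullCross {C A : Type*} (f : C → Set A) (d e : Set C) : C → Set (A ⊕ A × A) :=
  fun c => {z | Sum.elim
    (fun x => x ∈ f c ∧ x ∉ atomSet f d \ atomSet f e)
    (fun p : A × A =>
      p.1 ∈ atomSet f d \ atomSet f e ∧ p.2 ∈ atomSet f e ∧ (p.1 ∈ f c ∨ p.2 ∈ f c)) z}

open Set

lemma mem_atomSet {C A : Type*} {f : C → Set A} {t : Set C} {x : A} :
    x ∈ atomSet f t ↔ ∃ c ∈ t, x ∈ f c := by simp [atomSet]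

lemma atomSet_union {C A : Type*} (f : C → Set A) (s t : Set C) :
    atomSet f (s ∪ t) = atomSet f s ∪ atomSet f t := by
  ext x
  simp only [mem_atomSet, mem_union, mem_union]
  constructor
  · rintro ⟨c, hc | hc, hx⟩
    · exact Or.inl ⟨c, hc, hx⟩
    · exact Or.inr ⟨c, hc, hx⟩
  · rintro (⟨c, hc, hx⟩ | ⟨c, hc, hx⟩)
    · exact ⟨c, Or.inl hc, hx⟩
    · exact ⟨c, Or.inr hc, hx⟩

lemma mem_fullCross_inl {C A : Type*} {f : C → Set A} {d e : Set C} {c : C} {x : A} :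
    Sum.inl x ∈ fullCross f d e c ↔ x ∈ f c ∧ x ∉ atomSet f d \ atomSet f e := Iff.rfl

lemma mem_fullCross_inr {C A : Type*} {f : C → Set A} {d e : Set C} {c : C} {p : A × A} :
    Sum.inr p ∈ fullCross f d e c ↔
      p.1 ∈ atomSet f d \ atomSet f e ∧ p.2 ∈ atomSet f e ∧ (p.1 ∈ f c ∨ p.2 ∈ f c) :=
  Iff.rfl

lemma inl_mem_atomSet_fullCross {C A : Type*} {f : C → Set A} {d e t : Set C} {x : A} :
    Sum.inl x ∈ atomSet (fullCross f d e) t ↔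
      x ∈ atomSet f t ∧ x ∉ atomSet f d \ atomSet f e := by
  constructor
  · intro hz
    obtain ⟨c, hc, hx, hΦ⟩ := mem_atomSet.mp hz
    exact ⟨mem_atomSet.mpr ⟨c, hc, hx⟩, hΦ⟩
  · rintro ⟨hx, hΦ⟩
    obtain ⟨c, hc, hx⟩ := mem_atomSet.mp hx
    exact mem_atomSet.mpr ⟨c, hc, mem_fullCross_inl.mpr ⟨hx, hΦ⟩⟩

lemma inr_mem_atomSet_fullCross {C A : Type*} {f : C → Set A} {d e t : Set C} {p : A × A} :
    Sum.inr p ∈ atomSet (fullCross f d e) t ↔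
      p.1 ∈ atomSet f d \ atomSet f e ∧ p.2 ∈ atomSet f e ∧
        (p.1 ∈ atomSet f t ∨ p.2 ∈ atomSet f t) := by
  constructor
  · intro hz
    obtain ⟨c, hc, hΦ, hE, hor⟩ := mem_atomSet.mp hz
    refine ⟨hΦ, hE, ?_⟩
    rcases hor with h1 | h2
    · exact Or.inl (mem_atomSet.mpr ⟨c, hc, h1⟩)
    · exact Or.inr (mem_atomSet.mpr ⟨c, hc, h2⟩)
  · rintro ⟨hΦ, hE, hor⟩
    rcases hor with h1 | h2
    · obtain ⟨c, hc, h1⟩ := mem_atomSet.mp h1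
      exact mem_atomSet.mpr ⟨c, hc, mem_fullCross_inr.mpr ⟨hΦ, hE, Or.inl h1⟩⟩
    · obtain ⟨c, hc, h2⟩ := mem_atomSet.mp h2
      exact mem_atomSet.mpr ⟨c, hc, mem_fullCross_inr.mpr ⟨hΦ, hE, Or.inr h2⟩⟩

/-- The full crossing of `d` into `e` satisfies `a ≤ b` iff either `f`
already satisfied `a ≤ b`, or `f` satisfied both `a ∪ d ≤ b ∪ d` and `e ≤ b`. -/
theorem fullCross_positive_characterization {C A : Type*} (f : C → Set A) (d e : Set C) :
    ∀ a b : Set C,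
      Sat (fullCross f d e) a b ↔
        (Sat f a b ∨ (Sat f (a ∪ d) (b ∪ d) ∧ Sat f e b)) := by
  intro a b
  constructor
  · intro h
    by_cases hE : Sat f e b
    · right
      refine ⟨?_, hE⟩
      intro x hx
      rw [atomSet_union] at hx ⊢
      rcases hx with ha | hd
      · by_cases hD : x ∈ atomSet f d
        · exact Or.inr hD
        · have := h (inl_mem_atomSet_fullCross.mpr ⟨ha, fun hΦ => hD hΦ.1⟩)
          rw [inl_mem_atomSet_fullCross] at this
          exact Or.inl this.1
      · exact Or.inr hd
    · left
      obtain ⟨ε₁, hε₁, hε₁b⟩ := not_subset.mp hE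
      intro x hx
      by_cases hΦ : x ∈ atomSet f d \ atomSet f e
      · have := h (inr_mem_atomSet_fullCross (p := (x, ε₁)) |>.mpr ⟨hΦ, hε₁, Or.inl hx⟩)
        rw [inr_mem_atomSet_fullCross] at this
        rcases this.2.2 with h1 | h2
        · exact h1
        · exact absurd h2 hε₁b
      · have := h (inl_mem_atomSet_fullCross.mpr ⟨hx, hΦ⟩)
        rw [inl_mem_atomSet_fullCross] at this
        exact this.1
  · rintro (h | ⟨h1, h2⟩) <;> intro z hz
    · rcases z with x | p
      · rw [inl_mem_atomSet_fullCross] at hz ⊢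
        exact ⟨h hz.1, hz.2⟩
      · rw [inr_mem_atomSet_fullCross] at hz ⊢
        exact ⟨hz.1, hz.2.1, hz.2.2.imp (fun hp => h hp) (fun hp => h hp)⟩
    · rcases z with x | p
      · rw [inl_mem_atomSet_fullCross] at hz ⊢
        refine ⟨?_, hz.2⟩
        have : x ∈ atomSet f (b ∪ d) := h1 (by rw [atomSet_union]; exact Or.inl hz.1)
        rw [atomSet_union] at this
        rcases this with hb | hd
        · exact hb
        · by_cases hxe : x ∈ atomSet f e
          · exact h2 hxe
          · exact absurd ⟨hd, hxe⟩ hz.2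
      · rw [inr_mem_atomSet_fullCross] at hz ⊢
        exact ⟨hz.1, hz.2.1, Or.inr (h2 hz.2.1)⟩
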